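/- For all real t, f(t)^2 / 2 ≤ f'(t) · f(t) · t ≤ f(t)^2. -/

import Mathlib

theorem stmt_7 (f : ℝ → ℝ) (hf0 : f 0 = 0) (hodd : ∀ t : ℝ, f (-t) = -f t)
    (hf1 : ∀ t : ℝ, 0 ≤ t → HasDerivAt f ((1 + 2 * f t ^ 2) ^ (-(1/2) : ℝ)) t) :
    ∀ t : ℝ, f t ^ 2 / 2 ≤ deriv f t * f t * t ∧ deriv f t * f t * t ≤ f t ^ 2 := by
  have hc : ∀ x : ℝ, (0:ℝ) < 1 + 2 * f x ^ 2 := fun x => by positivity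
  have hdval : ∀ x : ℝ, (1 + 2 * f x ^ 2) ^ (-(1/2) : ℝ) = (Real.sqrt (1 + 2 * f x ^ 2))⁻¹ := by
    intro x
    rw [Real.rpow_neg (hc x).le, ← Real.sqrt_eq_rpow]
  have hspos : ∀ x : ℝ, 0 < Real.sqrt (1 + 2 * f x ^ 2) := fun x => Real.sqrt_pos.mpr (hc x)
  have hcont : ContinuousOn f (Set.Ici 0) := fun x hx => ((hf1 x hx).continuousAt).continuousWithinAt
  have hfnn : ∀ x : ℝ, 0 ≤ x → 0 ≤ f x := by
    intro x hx
    have hmono : MonotoneOn f (Set.Ici 0) := by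
      apply monotoneOn_of_deriv_nonneg (convex_Ici 0) hcont
      · intro y hy
        rw [interior_Ici] at hy
        exact ((hf1 y hy.le).differentiableAt).differentiableWithinAt
      · intro y hy
        rw [interior_Ici] at hy
        rw [(hf1 y hy.le).deriv, hdval]
        positivity
    have := hmono Set.self_mem_Ici hx hx
    rwa [hf0] at this
  -- derivative of F t = f t * sqrt (1 + 2 f t ^ 2)
  have hF : ∀ x : ℝ, 0 ≤ x → HasDerivAt (fun t => f t * Real.sqrt (1 + 2 * f t ^ 2))
      ((1 + 4 * f x ^ 2) / (1 + 2 * f x ^ 2)) x := by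
    intro x hx
    have hd := hf1 x hx
    have hinner : HasDerivAt (fun t => 1 + 2 * f t ^ 2)
        (2 * (2 * f x ^ 1 * ((1 + 2 * f x ^ 2) ^ (-(1/2) : ℝ)))) x :=
      ((hd.pow 2).const_mul 2).const_add 1
    have hsq := (Real.hasDerivAt_sqrt (hc x).ne').comp x hinner
    have hmul := hd.mul hsq
    refine hmul.congr_deriv ?_
    have hss : Real.sqrt (1 + 2 * f x ^ 2) * Real.sqrt (1 + 2 * f x ^ 2) = 1 + 2 * f x ^ 2 :=
      Real.mul_self_sqrt (hc x).le
    rw [hdval]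
    simp only [Function.comp_apply]
    have h1 := (hspos x).ne'
    field_simp
    nlinarith [hss, hspos x]
  -- key bounds for x ≥ 0
  have key1 : ∀ x : ℝ, 0 ≤ x → x ≤ f x * Real.sqrt (1 + 2 * f x ^ 2) := by
    intro x hx
    have hmono : MonotoneOn (fun t => f t * Real.sqrt (1 + 2 * f t ^ 2) - t) (Set.Ici 0) := by
      apply monotoneOn_of_deriv_nonneg (convex_Ici 0)
      · intro y hy
        exact (((hF y hy).sub (hasDerivAt_id' y)).continuousAt).continuousWithinAt
      · intro y hy
        rw [interior_Ici] at hy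
        exact (((hF y hy.le).sub (hasDerivAt_id' y)).differentiableAt).differentiableWithinAt
      · intro y hy
        rw [interior_Ici] at hy
        rw [HasDerivAt.deriv (f := fun t => f t * Real.sqrt (1 + 2 * f t ^ 2) - t) ((hF y hy.le).sub (hasDerivAt_id' y))]
        rw [sub_nonneg, le_div_iff₀ (hc y)]
        nlinarith [sq_nonneg (f y)]
    have := hmono Set.self_mem_Ici hx hx
    simp only [hf0, zero_mul, sub_zero, zero_sub, neg_zero] at this
    linarith [this]
  have key2 : ∀ x : ℝ, 0 ≤ x → f x * Real.sqrt (1 + 2 * f x ^ 2) ≤ 2 * x := by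
    intro x hx
    have hmono : MonotoneOn (fun t => 2 * t - f t * Real.sqrt (1 + 2 * f t ^ 2)) (Set.Ici 0) := by
      apply monotoneOn_of_deriv_nonneg (convex_Ici 0)
      · intro y hy
        exact ((((hasDerivAt_id' y).const_mul 2).sub (hF y hy)).continuousAt).continuousWithinAt
      · intro y hy
        rw [interior_Ici] at hy
        exact ((((hasDerivAt_id' y).const_mul 2).sub (hF y hy.le)).differentiableAt).differentiableWithinAt
      · intro y hy
        rw [interior_Ici] at hy
        rw [HasDerivAt.deriv (f := fun t => 2 * t - f t * Real.sqrt (1 + 2 * f t ^ 2)) (((hasDerivAt_id' y).const_mul 2).sub (hF y hy.le))]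
        have hcy := hc y
        rw [sub_nonneg, div_le_iff₀ hcy]
        nlinarith
    have := hmono Set.self_mem_Ici hx hx
    simp only [hf0, zero_mul, sub_zero, mul_zero, sub_zero] at this
    linarith [this]
  -- main result for s ≥ 0
  have main : ∀ s : ℝ, 0 ≤ s →
      f s ^ 2 / 2 ≤ (1 + 2 * f s ^ 2) ^ (-(1/2) : ℝ) * f s * s ∧
      (1 + 2 * f s ^ 2) ^ (-(1/2) : ℝ) * f s * s ≤ f s ^ 2 := by
    intro s hs
    rw [hdval]
    have h1 := key1 s hs
    have h2 := key2 s hs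
    have h3 := hfnn s hs
    have h4 := hspos s
    have h5 : Real.sqrt (1 + 2 * f s ^ 2) * (Real.sqrt (1 + 2 * f s ^ 2))⁻¹ = 1 :=
      mul_inv_cancel₀ h4.ne'
    have h6 : (0:ℝ) ≤ (Real.sqrt (1 + 2 * f s ^ 2))⁻¹ := inv_nonneg.mpr h4.le
    constructor
    · nlinarith [mul_le_mul_of_nonneg_left h2 h3,
        mul_le_mul_of_nonneg_left (mul_le_mul_of_nonneg_left h2 h3) h6]
    · nlinarith [mul_le_mul_of_nonneg_left h1 h3,
        mul_le_mul_of_nonneg_left (mul_le_mul_of_nonneg_left h1 h3) h6]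
  intro t
  rcases le_or_gt 0 t with ht | ht
  · rw [(hf1 t ht).deriv]
    exact main t ht
  · set s := -t with hst
    have hs : 0 ≤ s := by simp [hst]; linarith
    have hds : HasDerivAt f ((1 + 2 * f s ^ 2) ^ (-(1/2) : ℝ)) t := by
      have h1 := hf1 s hs
      have h2 : HasDerivAt (fun x : ℝ => f (-x)) ((1 + 2 * f s ^ 2) ^ (-(1/2) : ℝ) * (-1)) t := by
        have hn : HasDerivAt (fun x : ℝ => -x) (-1 : ℝ) t := hasDerivAt_neg t
        have : -t = s := hst.symm
        exact HasDerivAt.comp t (this ▸ h1) hn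
      have h3 := h2.neg
      have heq : (fun x : ℝ => -f (-x)) = f := by
        funext x
        rw [hodd, neg_neg]
      rw [show (-fun x : ℝ => f (-x)) = (fun x : ℝ => -f (-x)) from rfl, heq] at h3
      refine h3.congr_deriv ?_
      ring
    rw [hds.deriv]
    have hts : t = -s := by rw [hst, neg_neg]
    have hfts : f t = -f s := by rw [hts, hodd]
    obtain ⟨m1, m2⟩ := main s hs
    rw [hfts, hts]
    constructor
    · nlinarith [m1]
    · nlinarith [m2]
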